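/- A loopless graph H is a threshold graph (constructible from a single vertex by repeatedly adding an isolated vertex or a dominating vertex) if and only if H contains no induced subgraph isomorphic to 2K2, P4, or C4. -/

import Mathlib

/-- `G` contains an induced copy of `F`. -/
def HasInducedCopy {V W : Type} (F : SimpleGraph V) (G : SimpleGraph W) : Prop :=
  ∃ f : V ↪ W, ∀ u v : V, F.Adj u v ↔ G.Adj (f u) (f v)

/-- Two disjoint edges: 2K2. -/
def twoK2 : SimpleGraph (Fin 4) :=
  SimpleGraph.fromRel (fun a b => (a = 0 ∧ b = 1) ∨ (a = 2 ∧ b = 3))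

/-- The path on four vertices: P4. -/
def P4graph : SimpleGraph (Fin 4) :=
  SimpleGraph.fromRel (fun a b => (a = 0 ∧ b = 1) ∨ (a = 1 ∧ b = 2) ∨ (a = 2 ∧ b = 3))

/-- The cycle on four vertices: C4. -/
def C4graph : SimpleGraph (Fin 4) :=
  SimpleGraph.fromRel
    (fun a b => (a = 0 ∧ b = 1) ∨ (a = 1 ∧ b = 2) ∨ (a = 2 ∧ b = 3) ∨ (a = 3 ∧ b = 0))

/-- Add a new isolated vertex to `G`. -/
def addIsolated {V : Type} (G : SimpleGraph V) : SimpleGraph (Option V) where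
  Adj a b :=
    match a, b with
    | some x, some y => G.Adj x y
    | _, _ => False
  symm := by
    constructor
    intro a b h
    cases a <;> cases b <;> simp_all <;> exact h.symm
  loopless := by
    constructor
    intro a h
    cases a
    · exact h
    · exact G.loopless.irrefl _ h

/-- Add a new dominating vertex to `G` (adjacent to all existing vertices). -/
def addDominating {V : Type} (G : SimpleGraph V) : SimpleGraph (Option V) where
  Adj a b :=
    match a, b with
    | some x, some y => G.Adj x y
    | some _, none => True
    | none, some _ => True
    | none, none => False
  symm := by
    constructor
    intro a b h
    cases a <;> cases b <;> simp_all <;> exact h.symm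
  loopless := by
    constructor
    intro a h
    cases a
    · exact h
    · exact G.loopless.irrefl _ h

/-- Threshold graphs: constructible from a single vertex by repeatedly adding
an isolated vertex or a dominating vertex. -/
inductive IsThreshold : {V : Type} → SimpleGraph V → Prop
  | base : IsThreshold (⊥ : SimpleGraph (Fin 1))
  | isolated {V : Type} {G : SimpleGraph V} : IsThreshold G → IsThreshold (addIsolated G)
  | dominating {V : Type} {G : SimpleGraph V} : IsThreshold G → IsThreshold (addDominating G)

/- ===== auxiliary material ===== -/


def Good {V : Type} (G : SimpleGraph V) : Prop :=
  ¬ HasInducedCopy twoK2 G ∧ ¬ HasInducedCopy P4graph G ∧ ¬ HasInducedCopy C4graph G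

@[simp] lemma addIsolated_adj_some_some {V : Type} (G : SimpleGraph V) (x y : V) :
    (addIsolated G).Adj (some x) (some y) ↔ G.Adj x y := Iff.rfl

@[simp] lemma addIsolated_adj_none {V : Type} (G : SimpleGraph V) (b : Option V) :
    ¬ (addIsolated G).Adj none b := by cases b <;> exact fun h => h

@[simp] lemma addDominating_adj_some_some {V : Type} (G : SimpleGraph V) (x y : V) :
    (addDominating G).Adj (some x) (some y) ↔ G.Adj x y := Iff.rfl

@[simp] lemma addDominating_adj_none_some {V : Type} (G : SimpleGraph V) (x : V) :
    (addDominating G).Adj none (some x) := trivial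

lemma copy_of_iso {A V W : Type} (F : SimpleGraph A) {G : SimpleGraph V} {T : SimpleGraph W}
    (e : G ≃g T) : HasInducedCopy F G → HasInducedCopy F T := by
  rintro ⟨f, hf⟩
  exact ⟨f.trans e.toEquiv.toEmbedding, fun u v => (hf u v).trans (e.map_adj_iff).symm⟩

lemma good_of_iso {V W : Type} {G : SimpleGraph V} {T : SimpleGraph W} (e : G ≃g T)
    (h : Good T) : Good G :=
  ⟨fun hc => h.1 (copy_of_iso _ e hc), fun hc => h.2.1 (copy_of_iso _ e hc),
    fun hc => h.2.2 (copy_of_iso _ e hc)⟩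

/- lift a copy out of Option when no vertex maps to none -/
lemma lift_copy {V : Type} {G : SimpleGraph V} {G' : SimpleGraph (Option V)}
    (hG' : ∀ x y : V, G'.Adj (some x) (some y) ↔ G.Adj x y)
    {F : SimpleGraph (Fin 4)} (f : Fin 4 ↪ Option V)
    (hf : ∀ u v, F.Adj u v ↔ G'.Adj (f u) (f v))
    (hns : ∀ i, f i ≠ none) : HasInducedCopy F G := by
  have hex : ∀ i, ∃ x, f i = some x := by
    intro i
    cases h : f i with
    | none => exact absurd h (hns i)
    | some x => exact ⟨x, rfl⟩
  choose g hg using hex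
  refine ⟨⟨g, fun i j hij => f.injective ?_⟩, fun u v => ?_⟩
  · rw [hg i, hg j, hij]
  · rw [hf u v, hg u, hg v, hG']
    exact Iff.rfl

lemma twoK2_deg : ∀ i : Fin 4, ∃ j, twoK2.Adj i j := by
  simp only [twoK2, SimpleGraph.fromRel_adj]; decide
lemma P4_deg : ∀ i : Fin 4, ∃ j, P4graph.Adj i j := by
  simp only [P4graph, SimpleGraph.fromRel_adj]; decide
lemma C4_deg : ∀ i : Fin 4, ∃ j, C4graph.Adj i j := by
  simp only [C4graph, SimpleGraph.fromRel_adj]; decide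
lemma twoK2_nondeg : ∀ i : Fin 4, ∃ j, j ≠ i ∧ ¬ twoK2.Adj i j := by
  simp only [twoK2, SimpleGraph.fromRel_adj]; decide
lemma P4_nondeg : ∀ i : Fin 4, ∃ j, j ≠ i ∧ ¬ P4graph.Adj i j := by
  simp only [P4graph, SimpleGraph.fromRel_adj]; decide
lemma C4_nondeg : ∀ i : Fin 4, ∃ j, j ≠ i ∧ ¬ C4graph.Adj i j := by
  simp only [C4graph, SimpleGraph.fromRel_adj]; decide

lemma copy_addIsolated {V : Type} {G : SimpleGraph V} {F : SimpleGraph (Fin 4)}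
    (hF : ∀ i, ∃ j, F.Adj i j) :
    HasInducedCopy F (addIsolated G) → HasInducedCopy F G := by
  rintro ⟨f, hf⟩
  refine lift_copy (fun _ _ => Iff.rfl) f hf ?_
  intro i hnone
  obtain ⟨j, hj⟩ := hF i
  have := (hf i j).mp hj
  rw [hnone] at this
  exact addIsolated_adj_none G _ this

lemma copy_addDominating {V : Type} {G : SimpleGraph V} {F : SimpleGraph (Fin 4)}
    (hF : ∀ i, ∃ j, j ≠ i ∧ ¬ F.Adj i j) :
    HasInducedCopy F (addDominating G) → HasInducedCopy F G := by
  rintro ⟨f, hf⟩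
  refine lift_copy (fun _ _ => Iff.rfl) f hf ?_
  intro i hnone
  obtain ⟨j, hji, hj⟩ := hF i
  have hfj : f j ≠ none := by
    rw [← hnone]; exact fun h => hji (f.injective h)
  obtain ⟨x, hx⟩ : ∃ x, f j = some x := by
    cases h : f j with
    | none => exact absurd h hfj
    | some x => exact ⟨x, rfl⟩
  exact hj ((hf i j).mpr (by rw [hnone, hx]; exact trivial))

lemma forward : ∀ {W : Type} {T : SimpleGraph W}, IsThreshold T → Good T := by
  intro W T h
  induction h with
  | base =>
    refine ⟨?_, ?_, ?_⟩ <;>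
      · rintro ⟨f, -⟩
        have := Fintype.card_le_of_embedding f
        simp at this
  | isolated _ ih =>
    exact ⟨fun hc => ih.1 (copy_addIsolated twoK2_deg hc),
      fun hc => ih.2.1 (copy_addIsolated P4_deg hc),
      fun hc => ih.2.2 (copy_addIsolated C4_deg hc)⟩
  | dominating _ ih =>
    exact ⟨fun hc => ih.1 (copy_addDominating twoK2_nondeg hc),
      fun hc => ih.2.1 (copy_addDominating P4_nondeg hc),
      fun hc => ih.2.2 (copy_addDominating C4_nondeg hc)⟩

lemma copy4 {V : Type} (F : SimpleGraph (Fin 4)) {G : SimpleGraph V} (a b c d : V)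
    (hinj : Function.Injective ![a, b, c, d])
    (hadj : ∀ i j : Fin 4, F.Adj i j ↔ G.Adj (![a, b, c, d] i) (![a, b, c, d] j)) :
    HasInducedCopy F G := ⟨⟨_, hinj⟩, hadj⟩

lemma inj4 {V : Type} {a b c d : V} (h1 : a ≠ b) (h2 : a ≠ c) (h3 : a ≠ d)
    (h4 : b ≠ c) (h5 : b ≠ d) (h6 : c ≠ d) : Function.Injective ![a, b, c, d] := by
  intro i j hij
  fin_cases i <;> fin_cases j <;> simp_all

lemma nested {V : Type} {G : SimpleGraph V} (hG : Good G) (u v : V) :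
    (∀ x, G.Adj u x → x ≠ v → G.Adj v x) ∨ (∀ x, G.Adj v x → x ≠ u → G.Adj u x) := by
  by_contra h
  push_neg at h
  obtain ⟨⟨x, hux, hxv, hvx⟩, ⟨y, hvy, hyu, huy⟩⟩ := h
  have huv' : u ≠ v := fun h => hvx (h ▸ hux)
  have hxy' : x ≠ y := fun h => hvx (h ▸ hvy).symm.symm
  have hxu : x ≠ u := hux.symm.ne
  have hyv : y ≠ v := hvy.symm.ne
  have huy' : u ≠ y := hyu.symm
  have hxva : ¬ G.Adj x v := fun h => hvx h.symm
  have hyua : ¬ G.Adj y u := fun h => huy h.symm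
  by_cases huv : G.Adj u v <;> by_cases hxy : G.Adj x y
  · -- C4 : u x y v
    refine hG.2.2 (copy4 C4graph u x y v (inj4 hux.ne huy' huv' hxy.ne hxv hyv) ?_)
    intro i j
    fin_cases i <;> fin_cases j <;>
      simp [C4graph, SimpleGraph.fromRel_adj, hux, hux.symm, hxy, hxy.symm,
        hvy, hvy.symm, huv, huv.symm, huy, hyua, hxva, hvx, G.irrefl]
  · -- P4 : x u v y
    have hyxa : ¬ G.Adj y x := fun h => hxy h.symm
    refine hG.2.1 (copy4 P4graph x u v y (inj4 hxu hxv hxy' huv' huy' hyv.symm) ?_)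
    intro i j
    fin_cases i <;> fin_cases j <;>
      simp [P4graph, SimpleGraph.fromRel_adj, hux, hux.symm, huv, huv.symm,
        hvy, hvy.symm, hxy, hyxa, huy, hyua, hxva, hvx, G.irrefl]
  · -- P4 : u x y v
    have hvua : ¬ G.Adj v u := fun h => huv h.symm
    refine hG.2.1 (copy4 P4graph u x y v (inj4 hux.ne huy' huv' hxy.ne hxv hyv) ?_)
    intro i j
    fin_cases i <;> fin_cases j <;>
      simp [P4graph, SimpleGraph.fromRel_adj, hux, hux.symm, hxy, hxy.symm,
        hvy, hvy.symm, huv, hvua, huy, hyua, hxva, hvx, G.irrefl]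
  · -- 2K2 : u x v y
    have hvua : ¬ G.Adj v u := fun h => huv h.symm
    have hyxa : ¬ G.Adj y x := fun h => hxy h.symm
    refine hG.1 (copy4 twoK2 u x v y (inj4 hux.ne huv' huy' hxv hxy' hyv.symm) ?_)
    intro i j
    fin_cases i <;> fin_cases j <;>
      simp [twoK2, SimpleGraph.fromRel_adj, hux, hux.symm, hvy, hvy.symm,
        huv, hvua, hxy, hyxa, huy, hyua, hxva, hvx, G.irrefl]

lemma exists_iso_or_dom {V : Type} [Fintype V] [Nonempty V] {G : SimpleGraph V}
    (hG : Good G) : ∃ v : V, (∀ u, ¬ G.Adj v u) ∨ (∀ u, u ≠ v → G.Adj v u) := by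
  classical
  letI : DecidableRel G.Adj := fun _ _ => Classical.dec _
  obtain ⟨v, -, hv⟩ := Finset.exists_max_image Finset.univ (fun x : V => (G.neighborFinset x).card)
    ⟨Classical.arbitrary V, Finset.mem_univ _⟩
  by_cases hdom : ∀ u, u ≠ v → G.Adj v u
  · exact ⟨v, Or.inr hdom⟩
  push_neg at hdom
  obtain ⟨u, hune, hunadj⟩ := hdom
  refine ⟨u, Or.inl fun w hw => ?_⟩
  have hwv : w ≠ v := fun h => hunadj ((h ▸ hw).symm)
  by_cases hwvadj : G.Adj w v
  · rcases nested hG w v with hc | hc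
    · exact hunadj (hc u hw.symm hune)
    · -- deg w ≥ deg v + 1
      have hsub : insert u (insert v ((G.neighborFinset v).erase w)) ⊆ G.neighborFinset w := by
        intro z hz
        rw [Finset.mem_insert, Finset.mem_insert] at hz
        rcases hz with rfl | rfl | hz
        · rw [SimpleGraph.mem_neighborFinset]; exact hw.symm
        · rw [SimpleGraph.mem_neighborFinset]; exact hwvadj
        · rw [Finset.mem_erase, SimpleGraph.mem_neighborFinset] at hz
          rw [SimpleGraph.mem_neighborFinset]
          exact hc z hz.2 hz.1
      have hcard : (G.neighborFinset v).card + 1 ≤ (G.neighborFinset w).card := by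
        have h1 : (insert u (insert v ((G.neighborFinset v).erase w))).card ≤
            (G.neighborFinset w).card := Finset.card_le_card hsub
        have hunotin : u ∉ insert v ((G.neighborFinset v).erase w) := by
          simp only [Finset.mem_insert, Finset.mem_erase, SimpleGraph.mem_neighborFinset]
          push_neg
          exact ⟨hune, fun _ => hunadj⟩
        rw [Finset.card_insert_of_notMem hunotin, Finset.card_insert_of_notMem (by simp),
          Finset.card_erase_of_mem
            (by rw [SimpleGraph.mem_neighborFinset]; exact hwvadj.symm)] at h1
        have hd1 : 1 ≤ (G.neighborFinset v).card :=
          Finset.card_pos.mpr ⟨w, by rw [SimpleGraph.mem_neighborFinset]; exact hwvadj.symm⟩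
        omega
      have := hv w (Finset.mem_univ w)
      omega
  · rcases nested hG u v with hc | hc
    · exact hwvadj ((hc w hw hwv).symm)
    · -- deg u ≥ deg v + 1
      have hsub : insert w (G.neighborFinset v) ⊆ G.neighborFinset u := by
        intro z hz
        rw [Finset.mem_insert] at hz
        rcases hz with rfl | hz
        · rw [SimpleGraph.mem_neighborFinset]; exact hw
        · rw [SimpleGraph.mem_neighborFinset] at hz ⊢
          refine hc z hz fun h => hunadj (h ▸ hz)
      have hcard : (G.neighborFinset v).card + 1 ≤ (G.neighborFinset u).card := by
        have h1 : (insert w (G.neighborFinset v)).card ≤ (G.neighborFinset u).card :=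
          Finset.card_le_card hsub
        rw [Finset.card_insert_of_notMem (by
          rw [SimpleGraph.mem_neighborFinset]; exact fun h => hwvadj h.symm)] at h1
        omega
      have := hv u (Finset.mem_univ u)
      omega

def optEquiv {V : Type} [DecidableEq V] (v : V) : Option {x : V // x ≠ v} ≃ V where
  toFun o := o.elim v Subtype.val
  invFun x := if h : x = v then none else some ⟨x, h⟩
  left_inv o := by
    cases o with
    | none => simp
    | some x => simp [x.2]
  right_inv x := by
    by_cases h : x = v <;> simp [h]

def eraseG {V : Type} (G : SimpleGraph V) (v : V) : SimpleGraph {x : V // x ≠ v} :=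
  G.comap (Subtype.val)

lemma good_eraseG {V : Type} {G : SimpleGraph V} (hG : Good G) (v : V) :
    Good (eraseG G v) := by
  have key : ∀ F : SimpleGraph (Fin 4), HasInducedCopy F (eraseG G v) → HasInducedCopy F G := by
    rintro F ⟨f, hf⟩
    exact ⟨f.trans (Function.Embedding.subtype _), hf⟩
  exact ⟨fun h => hG.1 (key _ h), fun h => hG.2.1 (key _ h), fun h => hG.2.2 (key _ h)⟩

def isoAddIsolated {V : Type} [DecidableEq V] {G : SimpleGraph V} {v : V}
    (hv : ∀ u, ¬ G.Adj v u) : G ≃g addIsolated (eraseG G v) :=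
  SimpleGraph.Iso.symm <| by
    refine ⟨optEquiv v, ?_⟩
    rintro (_ | x) (_ | y)
    · simp [addIsolated, optEquiv, G.irrefl]
    · simpa [addIsolated, optEquiv] using fun h => hv y h
    · simpa [addIsolated, optEquiv] using fun h => hv x h.symm
    · simp [addIsolated, optEquiv, eraseG]

def isoAddDominating {V : Type} [DecidableEq V] {G : SimpleGraph V} {v : V}
    (hv : ∀ u, u ≠ v → G.Adj v u) : G ≃g addDominating (eraseG G v) :=
  SimpleGraph.Iso.symm <| by
    refine ⟨optEquiv v, ?_⟩
    rintro (_ | x) (_ | y)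
    · simp [addDominating, optEquiv, G.irrefl]
    · simpa [addDominating, optEquiv] using hv y y.2
    · simpa [addDominating, optEquiv] using (hv x x.2).symm
    · simp [addDominating, optEquiv, eraseG]

def isoOptionCongrIsolated {V W : Type} {G : SimpleGraph V} {T : SimpleGraph W}
    (e : G ≃g T) : addIsolated G ≃g addIsolated T := by
  refine ⟨Equiv.optionCongr e.toEquiv, ?_⟩
  rintro (_ | x) (_ | y) <;> simp [addIsolated, e.map_adj_iff]

def isoOptionCongrDominating {V W : Type} {G : SimpleGraph V} {T : SimpleGraph W}
    (e : G ≃g T) : addDominating G ≃g addDominating T := by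
  refine ⟨Equiv.optionCongr e.toEquiv, ?_⟩
  rintro (_ | x) (_ | y) <;> simp [addDominating, e.map_adj_iff]

lemma backward : ∀ (n : ℕ) {V : Type} [Fintype V] [Nonempty V] (G : SimpleGraph V),
    Fintype.card V = n → Good G →
    ∃ (W : Type) (T : SimpleGraph W), IsThreshold T ∧ Nonempty (G ≃g T) := by
  intro n
  induction n using Nat.strong_induction_on with
  | _ n ih =>
    intro V _ _ G hcard hG
    classical
    rcases eq_or_lt_of_le (Nat.succ_le_of_lt (Fintype.card_pos (α := V))) with h1 | h2
    · -- card = 1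
      refine ⟨Fin 1, ⊥, IsThreshold.base, ⟨⟨Fintype.equivFinOfCardEq (by omega), ?_⟩⟩⟩
      have : Subsingleton V := Fintype.card_le_one_iff_subsingleton.mp (by omega)
      intro a b
      simp only [SimpleGraph.bot_adj, false_iff]
      exact fun h => SimpleGraph.Adj.ne h (Subsingleton.elim a b)
    · -- card ≥ 2
      obtain ⟨v, hv⟩ := exists_iso_or_dom hG
      have hne : Nonempty {x : V // x ≠ v} := by
        obtain ⟨u, hu⟩ := Fintype.exists_ne_of_one_lt_card h2 v
        exact ⟨⟨u, hu⟩⟩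
      have hcard' : Fintype.card {x : V // x ≠ v} = n - 1 := by
        have h3 := Fintype.card_subtype_compl (fun x : V => x = v)
        simp only [Fintype.card_subtype_eq] at h3
        have h4 : Fintype.card {x : V // x ≠ v} = Fintype.card {x : V // ¬ x = v} :=
          Fintype.card_congr (Equiv.subtypeEquivRight (fun _ => Iff.rfl))
        omega
      have hlt : n - 1 < n := by omega
      obtain ⟨W, T, hT, ⟨e⟩⟩ := ih (n - 1) hlt (eraseG G v) hcard' (good_eraseG hG v)
      rcases hv with hiso | hdom
      · exact ⟨Option W, addIsolated T, hT.isolated,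
          ⟨(isoAddIsolated hiso).trans (isoOptionCongrIsolated e)⟩⟩
      · exact ⟨Option W, addDominating T, hT.dominating,
          ⟨(isoAddDominating hdom).trans (isoOptionCongrDominating e)⟩⟩

theorem stmt15 {V : Type} [Fintype V] [Nonempty V] (G : SimpleGraph V) :
    (∃ (W : Type) (T : SimpleGraph W), IsThreshold T ∧ Nonempty (G ≃g T)) ↔
      (¬ HasInducedCopy twoK2 G ∧ ¬ HasInducedCopy P4graph G ∧ ¬ HasInducedCopy C4graph G) := by
  constructor
  · rintro ⟨W, T, hT, ⟨e⟩⟩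
    exact good_of_iso e (forward hT)
  · intro h
    exact backward (Fintype.card V) G rfl h
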